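/- Let f : ℝ → ℝ be twice differentiable and let ζ be a zero of f. Let a < b < c be real numbers such that: (1) c − b ≤ (b − a)/2; (2) b ≤ ζ ≤ c; (3) the first derivative of f is positive on the half-open interval (a, c]; (4) there exists a real number e such that 2^e ≤ f″(x) ≤ 2^{e+1} for all x ∈ [a, c]. Define the Newton iterates z₀ = c and z_{i+1} = z_i − f(z_i)/f′(z_i). Then for every natural number i the iterate z_i is well defined (in particular f′(z_i) ≠ 0) and |z_i − ζ| ≤ 2^{1−2^i} · |c − ζ|. -/

import Mathlib

/-- Let `f : ℝ → ℝ` be twice differentiable and `ζ` a zero of `f`.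
Let `a < b < c` satisfy `c - b ≤ (b - a)/2`, `b ≤ ζ ≤ c`, `f' > 0` on `(a, c]`, and
`2^e ≤ f'' ≤ 2^(e+1)` on `[a, c]` for some real `e`.  Then every Newton iterate
`z i` starting from `z 0 = c` is well defined (`deriv f (z i) ≠ 0`) and satisfies
`|z i - ζ| ≤ 2^(1 - 2^i) * |c - ζ|`. -/
theorem newton_approximate_zero
    (f : ℝ → ℝ) (hf : Differentiable ℝ f) (hf' : Differentiable ℝ (deriv f))
    (ζ : ℝ) (hζ : f ζ = 0)
    (a b c : ℝ) (hab : a < b) (hbc : b < c)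
    (h1 : c - b ≤ (b - a) / 2)
    (h2 : b ≤ ζ) (h2' : ζ ≤ c)
    (h3 : ∀ x ∈ Set.Ioc a c, 0 < deriv f x)
    (h4 : ∃ e : ℝ, ∀ x ∈ Set.Icc a c,
      (2 : ℝ) ^ e ≤ deriv (deriv f) x ∧ deriv (deriv f) x ≤ (2 : ℝ) ^ (e + 1))
    (z : ℕ → ℝ) (hz0 : z 0 = c)
    (hziter : ∀ i : ℕ, z (i + 1) = z i - f (z i) / deriv f (z i)) :
    ∀ i : ℕ, deriv f (z i) ≠ 0 ∧
      |z i - ζ| ≤ (2 : ℝ) ^ ((1 : ℝ) - 2 ^ i) * |c - ζ| := by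
  obtain ⟨e, he⟩ := h4
  have hac : a < c := hab.trans hbc
  have haζ : a < ζ := lt_of_lt_of_le hab h2
  have h2pos : (0 : ℝ) < 2 := two_pos
  have h2e : (0 : ℝ) < (2 : ℝ) ^ e := Real.rpow_pos_of_pos two_pos e
  have hr1 : (2 : ℝ) ^ (e + 1) = 2 * 2 ^ e := by
    rw [Real.rpow_add two_pos, Real.rpow_one]; ring
  -- derivative helpers
  have hasH : ∀ (D x : ℝ), HasDerivAt (fun y => f y - D * y) (deriv f x - D) x := by
    intro D x
    have h := (hf x).hasDerivAt.sub ((hasDerivAt_id x).const_mul D); simp at h; exact h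
  have hasG : ∀ (D k w x : ℝ),
      HasDerivAt (fun y => f y - D * y - k * (y - w) ^ 2)
        (deriv f x - D - k * (2 * (x - w))) x := by
    intro D k w x
    have h1' := (hasH D x).sub ((((hasDerivAt_id x).sub_const w).pow 2).const_mul k)
    simp [mul_comm, mul_assoc] at h1' ⊢; exact h1'
  have hasL : ∀ (C x : ℝ), HasDerivAt (fun y => deriv f y - C * y) (deriv (deriv f) x - C) x := by
    intro C x
    have h := (hf' x).hasDerivAt.sub ((hasDerivAt_id x).const_mul C); simp at h; exact h
  -- f'(a) ≥ 0
  have hfa : 0 ≤ deriv f a := by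
    have ht : Filter.Tendsto (deriv f) (nhdsWithin a (Set.Ioi a)) (nhds (deriv f a)) :=
      (hf'.continuous.continuousAt.tendsto).mono_left nhdsWithin_le_nhds
    have hev : ∀ᶠ x in nhdsWithin a (Set.Ioi a), 0 ≤ deriv f x := by
      have h1' : ∀ᶠ x : ℝ in nhdsWithin a (Set.Ioi a), x < c :=
        eventually_nhdsWithin_of_eventually_nhds (eventually_lt_nhds hac)
      filter_upwards [h1', self_mem_nhdsWithin] with x hx1 hx2
      exact (h3 x ⟨hx2, hx1.le⟩).le
    exact ge_of_tendsto ht hev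
  -- monotone helpers on [a,c]
  have hderivmono : MonotoneOn (deriv f) (Set.Icc a c) := by
    refine monotoneOn_of_deriv_nonneg (convex_Icc a c) hf'.continuous.continuousOn
      hf'.differentiableOn (fun x hx => ?_)
    rw [interior_Icc] at hx
    exact le_trans h2e.le (he x ⟨hx.1.le, hx.2.le⟩).1
  have hφ : AntitoneOn (fun x => deriv f x - 2 ^ (e + 1) * x) (Set.Icc a c) := by
    refine antitoneOn_of_deriv_nonpos (convex_Icc a c) ?_ ?_ (fun x hx => ?_)
    · exact (hf'.continuous.sub (continuous_const.mul continuous_id)).continuousOn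
    · exact fun x _ => ((hasL (2 ^ (e + 1)) x).differentiableAt).differentiableWithinAt
    · rw [interior_Icc] at hx
      rw [(hasL (2 ^ (e + 1)) x).deriv]
      have := (he x ⟨hx.1.le, hx.2.le⟩).2
      linarith
  have hψ : MonotoneOn (fun x => deriv f x - 2 ^ e * x) (Set.Icc a c) := by
    refine monotoneOn_of_deriv_nonneg (convex_Icc a c) ?_ ?_ (fun x hx => ?_)
    · exact (hf'.continuous.sub (continuous_const.mul continuous_id)).continuousOn
    · exact fun x _ => ((hasL (2 ^ e) x).differentiableAt).differentiableWithinAt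
    · rw [interior_Icc] at hx
      rw [(hasL (2 ^ e) x).deriv]
      have := (he x ⟨hx.1.le, hx.2.le⟩).1
      linarith
  have hfmono : MonotoneOn f (Set.Icc ζ c) := by
    refine monotoneOn_of_deriv_nonneg (convex_Icc ζ c) hf.continuous.continuousOn
      hf.differentiableOn (fun x hx => ?_)
    rw [interior_Icc] at hx
    exact (h3 x ⟨haζ.trans hx.1, hx.2.le⟩).le
  -- main invariant
  have key : ∀ i : ℕ, ζ ≤ z i ∧ z i ≤ c ∧
      z i - ζ ≤ (2 : ℝ) ^ ((1 : ℝ) - 2 ^ i) * (c - ζ) := by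
    intro i
    induction i with
    | zero =>
      rw [hz0]
      refine ⟨h2', le_refl c, ?_⟩
      have : ((1 : ℝ) - 2 ^ (0 : ℕ)) = 0 := by norm_num
      rw [this, Real.rpow_zero, one_mul]
    | succ i ih =>
      obtain ⟨hz1, hz2, hz3⟩ := ih
      have hwmem : z i ∈ Set.Ioc a c := ⟨haζ.trans_le hz1, hz2⟩
      have hD : 0 < deriv f (z i) := h3 (z i) hwmem
      rw [hziter i]
      have hpow : (0 : ℝ) < (2 : ℝ) ^ ((1 : ℝ) - 2 ^ (i + 1)) :=
        Real.rpow_pos_of_pos two_pos _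
      by_cases hw : z i = ζ
      · have hfw : f (z i) = 0 := by rw [hw, hζ]
        rw [hfw, hw]
        simp only [zero_div, sub_zero]
        exact ⟨le_refl ζ, h2', by nlinarith [mul_nonneg hpow.le (sub_nonneg.mpr h2')]⟩
      · have hζw : ζ < z i := lt_of_le_of_ne hz1 (Ne.symm hw)
        have hε0 : (0 : ℝ) < c - ζ := sub_pos.mpr (hζw.trans_le hz2)
        set w := z i with hwdef
        set D := deriv f w with hDdef
        -- (A) 0 ≤ f w
        have hA : 0 ≤ f w := by
          have := hfmono (Set.mem_Icc.mpr ⟨le_refl ζ, h2'⟩) (Set.mem_Icc.mpr ⟨hz1, hz2⟩) hz1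
          rw [hζ] at this
          exact this
        -- (B) f w ≤ D * (w - ζ)
        have hhanti : AntitoneOn (fun x => f x - D * x) (Set.Icc ζ w) := by
          refine antitoneOn_of_deriv_nonpos (convex_Icc ζ w) ?_ ?_ (fun x hx => ?_)
          · exact (hf.continuous.sub (continuous_const.mul continuous_id)).continuousOn
          · exact fun x _ => ((hasH D x).differentiableAt).differentiableWithinAt
          · rw [interior_Icc] at hx
            rw [(hasH D x).deriv]
            have := hderivmono (Set.mem_Icc.mpr ⟨(haζ.trans hx.1).le, (hx.2.trans_le hz2).le⟩)
              (Set.mem_Icc.mpr ⟨(haζ.trans_le hz1).le, hz2⟩) hx.2.le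
            linarith
        have hB : f w ≤ D * (w - ζ) := by
          have := hhanti (Set.mem_Icc.mpr ⟨le_refl ζ, hζw.le⟩)
            (Set.mem_Icc.mpr ⟨hζw.le, le_refl w⟩) hζw.le
          simp only [hζ] at this
          nlinarith [this]
        -- (C) D * (w - ζ) - 2^e * (w - ζ)^2 ≤ f w
        have hgmono : MonotoneOn (fun x => f x - D * x - 2 ^ e * (x - w) ^ 2)
            (Set.Icc ζ w) := by
          refine monotoneOn_of_deriv_nonneg (convex_Icc ζ w) ?_ ?_ (fun x hx => ?_)
          · refine Continuous.continuousOn ?_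
            exact (hf.continuous.sub (continuous_const.mul continuous_id)).sub
              (continuous_const.mul ((continuous_id.sub continuous_const).pow 2))
          · exact fun x _ => ((hasG D (2 ^ e) w x).differentiableAt).differentiableWithinAt
          · rw [interior_Icc] at hx
            rw [(hasG D (2 ^ e) w x).deriv]
            have hφ' := hφ (Set.mem_Icc.mpr ⟨(haζ.trans hx.1).le, (hx.2.trans_le hz2).le⟩)
              (Set.mem_Icc.mpr ⟨(haζ.trans_le hz1).le, hz2⟩) hx.2.le
            simp only [hr1] at hφ'
            linarith
        have hC : D * (w - ζ) - 2 ^ e * (w - ζ) ^ 2 ≤ f w := by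
          have := hgmono (Set.mem_Icc.mpr ⟨le_refl ζ, hζw.le⟩)
            (Set.mem_Icc.mpr ⟨hζw.le, le_refl w⟩) hζw.le
          simp only [hζ] at this
          nlinarith [this]
        -- (D) 2^(e+1) * (c - ζ) ≤ D
        have hD2 : (2 : ℝ) ^ (e + 1) * (c - ζ) ≤ D := by
          have h5 := hψ (Set.mem_Icc.mpr ⟨le_refl a, hac.le⟩)
            (Set.mem_Icc.mpr ⟨(haζ.trans_le hz1).le, hz2⟩) (haζ.trans_le hz1).le
          simp only at h5
          have hwb : b ≤ w := h2.trans hz1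
          have s1 : 2 ^ e * (b - a) ≤ 2 ^ e * (w - a) :=
            mul_le_mul_of_nonneg_left (by linarith) h2e.le
          have s2 : 2 ^ e * (2 * (c - ζ)) ≤ 2 ^ e * (b - a) :=
            mul_le_mul_of_nonneg_left (by linarith) h2e.le
          rw [hr1]
          nlinarith [h5, hfa, s1, s2]
        -- the bound
        refine ⟨?_, ?_, ?_⟩
        · have : f w / D ≤ w - ζ := (div_le_iff₀ hD).mpr (by nlinarith [hB])
          linarith
        · have : 0 ≤ f w / D := div_nonneg hA hD.le
          linarith
        · have e1 : w - f w / D - ζ ≤ 2 ^ e * (w - ζ) ^ 2 / D := by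
          -- rewrite
            have heq : w - f w / D - ζ = (D * (w - ζ) - f w) / D := by
              field_simp
              ring
            rw [heq]
            exact (div_le_div_iff_of_pos_right hD).mpr (by linarith)
          have e2 : 2 ^ e * (w - ζ) ^ 2 / D ≤
              2 ^ e * (w - ζ) ^ 2 / ((2 : ℝ) ^ (e + 1) * (c - ζ)) := by
            apply div_le_div_of_nonneg_left (by positivity) ?_ hD2
            exact mul_pos (Real.rpow_pos_of_pos two_pos _) hε0
          have e3 : 2 ^ e * (w - ζ) ^ 2 / ((2 : ℝ) ^ (e + 1) * (c - ζ)) ≤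
              (2 : ℝ) ^ ((1 : ℝ) - 2 ^ (i + 1)) * (c - ζ) := by
            rw [div_le_iff₀ (mul_pos (Real.rpow_pos_of_pos two_pos _) hε0)]
            have hsq : (w - ζ) ^ 2 ≤ ((2 : ℝ) ^ ((1 : ℝ) - 2 ^ i) * (c - ζ)) ^ 2 :=
              pow_le_pow_left₀ (by linarith) hz3 2
            have hr2 : ((2 : ℝ) ^ ((1 : ℝ) - 2 ^ i)) ^ 2 = (2 : ℝ) ^ ((2 : ℝ) - 2 ^ (i + 1)) := by
              rw [← Real.rpow_natCast ((2 : ℝ) ^ ((1 : ℝ) - 2 ^ i)) 2,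
                ← Real.rpow_mul two_pos.le]
              congr 1
              push_cast
              rw [pow_succ]
              ring
            have hr3 : (2 : ℝ) ^ ((2 : ℝ) - 2 ^ (i + 1)) =
                2 * (2 : ℝ) ^ ((1 : ℝ) - 2 ^ (i + 1)) := by
              rw [show (2 : ℝ) - 2 ^ (i + 1) = 1 + ((1 : ℝ) - 2 ^ (i + 1)) by ring,
                Real.rpow_add two_pos, Real.rpow_one]
            calc 2 ^ e * (w - ζ) ^ 2
                ≤ 2 ^ e * ((2 : ℝ) ^ ((1 : ℝ) - 2 ^ i) * (c - ζ)) ^ 2 :=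
                  mul_le_mul_of_nonneg_left hsq h2e.le
              _ = (2 : ℝ) ^ ((1 : ℝ) - 2 ^ (i + 1)) * (c - ζ) * ((2 : ℝ) ^ (e + 1) * (c - ζ)) := by
                  rw [mul_pow, hr2, hr3, hr1]; ring
          linarith
  intro i
  obtain ⟨k1, k2, k3⟩ := key i
  refine ⟨ne_of_gt (h3 _ ⟨haζ.trans_le k1, k2⟩), ?_⟩
  rw [abs_of_nonneg (sub_nonneg.mpr k1), abs_of_nonneg (sub_nonneg.mpr h2')]
  exact k3
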